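/- Let G be a subgroup of finite index in a group H. If G admits a pointy action, then H admits a pointy action. -/

import Mathlib

/-! Common definitions: the full shift, its automorphism group, and wreath products. -/

/-- The full shift space `Σ^ℤ` (functions `ℤ → α`), carrying the product topology
where the alphabet `α` is given the discrete topology. -/
def FullShift (α : Type*) : Type _ := ℤ → α

instance (α : Type*) : TopologicalSpace (FullShift α) :=
  letI : TopologicalSpace α := ⊥
  (inferInstance : TopologicalSpace (ℤ → α))

/-- The shift homeomorphism `σ(x)(i) = x(i+1)`. -/
def shiftHomeo (α : Type*) : FullShift α ≃ₜ FullShift α where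
  toFun x := fun i => x (i + 1)
  invFun x := fun i => x (i - 1)
  left_inv x := by funext i; show x (i - 1 + 1) = x i; ring_nf
  right_inv x := by funext i; show x (i + 1 - 1) = x i; ring_nf
  continuous_toFun := by
    letI : TopologicalSpace α := ⊥
    exact continuous_pi fun i => continuous_apply (i + 1)
  continuous_invFun := by
    letI : TopologicalSpace α := ⊥
    exact continuous_pi fun i => continuous_apply (i - 1)

/-- The group of self-homeomorphisms of the full shift, under composition. -/
instance fullShiftHomeoGroup (α : Type*) : Group (FullShift α ≃ₜ FullShift α) where
  mul f g := g.trans f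
  one := Homeomorph.refl _
  inv := Homeomorph.symm
  mul_assoc f g h := Homeomorph.ext fun _ => rfl
  one_mul f := Homeomorph.ext fun _ => rfl
  mul_one f := Homeomorph.ext fun _ => rfl
  inv_mul_cancel f := Homeomorph.ext fun x => f.symm_apply_apply x

/-- The automorphism group `Aut(Σ^ℤ)` of the full shift: the centralizer of the
shift map in the group of self-homeomorphisms. -/
def ShiftAut (α : Type*) : Subgroup (FullShift α ≃ₜ FullShift α) :=
  Subgroup.centralizer {shiftHomeo α}

/-- Self-homeomorphisms of the full shift act on the full shift by application. -/
instance fullShiftHomeoMulAction (α : Type*) :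
    MulAction (FullShift α ≃ₜ FullShift α) (FullShift α) where
  smul f x := f x
  one_smul _ := rfl
  mul_smul _ _ _ := rfl

/-- The constant configuration with value `z`. -/
def constConfig (α : Type*) (z : α) : FullShift α := fun _ => z

/-- `Aut₀(Σ^ℤ)`: the subgroup of `Aut(Σ^ℤ)` consisting of the shift-commuting
self-homeomorphisms which fix the constant-`z` configuration. -/
def ShiftAut₀ (α : Type*) (z : α) : Subgroup (FullShift α ≃ₜ FullShift α) :=
  ShiftAut α ⊓ MulAction.stabilizer (FullShift α ≃ₜ FullShift α) (constConfig α z)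

/-- A group `G` admits a *pointy action* if there is a finite alphabet `E` with a
distinguished element `z` and an injective homomorphism `φ : G →* Aut(E^ℤ)` such that every
`φ g` fixes the constant-`z` configuration, and some `z`-finite configuration `x₀` has free
orbit, i.e. `g ↦ φ(g)(x₀)` is injective. -/
def HasPointyAction (G : Type*) [Group G] : Prop :=
  ∃ (E : Type) (_ : Fintype E) (z : E) (φ : G →* ShiftAut E),
    Function.Injective φ ∧
    (∀ g : G, (φ g : FullShift E ≃ₜ FullShift E) • constConfig E z = constConfig E z) ∧
    ∃ x₀ : FullShift E, {i : ℤ | x₀ i ≠ z}.Finite ∧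
      Function.Injective fun g : G => (φ g : FullShift E ≃ₜ FullShift E) • x₀


/-! ### Auxiliary construction for induced pointy actions -/

section PointyAux

variable {H : Type*} [Group H] {G : Subgroup H} {E : Type}
variable (φ : G →* ShiftAut E) {n : ℕ} (e : H ⧸ G ≃ Fin n)

/-- The alphabet for the induced action. -/
abbrev PAAlpha (E : Type) (n : ℕ) : Type := Fin n → E × Fin n

/-- The standard cocycle associated to a choice of coset representatives. -/
noncomputable def paCocycle (G : Subgroup H) (h : H) (c : H ⧸ G) : G :=
  ⟨c.out⁻¹ * h * (h⁻¹ • c).out, by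
    rw [mul_assoc]
    refine QuotientGroup.eq.mp ?_
    calc (QuotientGroup.mk c.out : H ⧸ G) = c := QuotientGroup.out_eq' c
      _ = h • (h⁻¹ • c) := by rw [smul_smul, mul_inv_cancel, one_smul]
      _ = h • (QuotientGroup.mk (h⁻¹ • c).out : H ⧸ G) := by rw [QuotientGroup.out_eq']
      _ = QuotientGroup.mk (h * (h⁻¹ • c).out) := rfl⟩

lemma paCocycle_coe (h : H) (c : H ⧸ G) :
    (paCocycle G h c : H) = c.out⁻¹ * h * (h⁻¹ • c).out := rfl

lemma paCocycle_one (c : H ⧸ G) : paCocycle G 1 c = 1 := by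
  apply Subtype.ext
  simp [paCocycle_coe]

lemma paCocycle_mul (h₁ h₂ : H) (c : H ⧸ G) :
    paCocycle G (h₁ * h₂) c = paCocycle G h₁ c * paCocycle G h₂ (h₁⁻¹ • c) := by
  apply Subtype.ext
  push_cast [paCocycle_coe]
  rw [show (h₁ * h₂)⁻¹ • c = h₂⁻¹ • h₁⁻¹ • c by rw [mul_inv_rev, mul_smul]]
  group

lemma pa_one_apply (v : FullShift E) :
    ((1 : ShiftAut E) : FullShift E ≃ₜ FullShift E) v = v := rfl

lemma pa_mul_apply (f g : ShiftAut E) (v : FullShift E) :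
    ((f * g : ShiftAut E) : FullShift E ≃ₜ FullShift E) v
      = (f : FullShift E ≃ₜ FullShift E) ((g : FullShift E ≃ₜ FullShift E) v) := rfl

lemma pa_shift_apply (g : ShiftAut E) (v : FullShift E) :
    (g : FullShift E ≃ₜ FullShift E) (fun j => v (j + 1))
      = fun i => (g : FullShift E ≃ₜ FullShift E) v (i + 1) := by
  have h1 : shiftHomeo E * (g : FullShift E ≃ₜ FullShift E)
      = (g : FullShift E ≃ₜ FullShift E) * shiftHomeo E :=
    Subgroup.mem_centralizer_iff.mp g.2 (shiftHomeo E) rfl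
  have h2 := congrArg (fun f : FullShift E ≃ₜ FullShift E => f v) h1
  exact (h2.symm : _)

/-- The raw induced map on the full shift over the induced alphabet. -/
noncomputable def paRawF (h : H) (x : FullShift (PAAlpha E n)) : FullShift (PAAlpha E n) :=
  fun i k =>
    ((φ (paCocycle G h (e.symm k)) : FullShift E ≃ₜ FullShift E)
        (fun j => (x j (e (h⁻¹ • e.symm k))).1) i,
      (x i (e (h⁻¹ • e.symm k))).2)

lemma paRawF_one (x : FullShift (PAAlpha E n)) : paRawF φ e 1 x = x := by
  funext i k
  show ((φ (paCocycle G 1 (e.symm k)) : FullShift E ≃ₜ FullShift E)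
      (fun j => (x j (e ((1 : H)⁻¹ • e.symm k))).1) i,
    (x i (e ((1 : H)⁻¹ • e.symm k))).2) = x i k
  rw [paCocycle_one, map_one]
  have h1 : ∀ v : FullShift E, (1 : FullShift E ≃ₜ FullShift E) v = v := fun _ => rfl
  simp [h1]
  rfl

lemma paRawF_mul (h₁ h₂ : H) (x : FullShift (PAAlpha E n)) :
    paRawF φ e (h₁ * h₂) x = paRawF φ e h₁ (paRawF φ e h₂ x) := by
  funext i k
  simp only [paRawF, Equiv.symm_apply_apply, paCocycle_mul, map_mul, pa_mul_apply,
    mul_inv_rev, mul_smul]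
  rfl

lemma paRawF_shift (h : H) (x : FullShift (PAAlpha E n)) :
    paRawF φ e h (fun i => x (i + 1)) = fun i => paRawF φ e h x (i + 1) := by
  funext i k
  have hv := congrFun (pa_shift_apply (φ (paCocycle G h (e.symm k)))
    (fun j => (x j (e (h⁻¹ • e.symm k))).1)) i
  exact congrArg (fun w => (w, (x (i + 1) (e (h⁻¹ • e.symm k))).2)) hv

lemma paRawF_continuous (h : H) : Continuous (paRawF φ e h) := by
  letI tE : TopologicalSpace E := ⊥
  letI tF : TopologicalSpace (Fin n) := ⊥
  haveI : DiscreteTopology E := ⟨rfl⟩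
  haveI : DiscreteTopology (Fin n) := ⟨rfl⟩
  have hdbot : @DiscreteTopology (PAAlpha E n) ⊥ := @DiscreteTopology.mk _ ⊥ rfl
  letI tA : TopologicalSpace (PAAlpha E n) := ⊥
  haveI : DiscreteTopology (PAAlpha E n) := ⟨rfl⟩
  refine continuous_pi (T := fun _ => (⊥ : TopologicalSpace (PAAlpha E n))) fun i => ?_
  have he : (@Pi.topologicalSpace (Fin n) (fun _ => E × Fin n)
        (fun _ => @instTopologicalSpaceProd E (Fin n) tE tF)) =
      (⊥ : TopologicalSpace (PAAlpha E n)) := by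
    haveI hd2 : @DiscreteTopology (PAAlpha E n)
        (@Pi.topologicalSpace (Fin n) (fun _ => E × Fin n)
          (fun _ => @instTopologicalSpaceProd E (Fin n) tE tF)) :=
      Pi.discreteTopology
    exact hd2.eq_bot
  have key : @Continuous (FullShift (PAAlpha E n)) (PAAlpha E n) _
      (@Pi.topologicalSpace (Fin n) (fun _ => E × Fin n)
        (fun _ => @instTopologicalSpaceProd E (Fin n) tE tF))
      (fun x => paRawF φ e h x i) := by
    refine continuous_pi
      (T := fun _ => @instTopologicalSpaceProd E (Fin n) tE tF) fun k => ?_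
    refine Continuous.prodMk ?_ ?_
    · refine (continuous_apply i).comp ?_
      refine (Homeomorph.continuous
        ((φ (paCocycle G h (e.symm k)) : FullShift E ≃ₜ FullShift E))).comp ?_
      refine continuous_pi fun j => ?_
      exact (@continuous_of_discreteTopology (PAAlpha E n) ⊥ hdbot E tE
        (fun a => (a (e (h⁻¹ • e.symm k))).1)).comp
        (@continuous_apply ℤ (fun _ => PAAlpha E n) (fun _ => ⊥) j)
    · exact (@continuous_of_discreteTopology (PAAlpha E n) ⊥ hdbot (Fin n) tF
        (fun a => (a (e (h⁻¹ • e.symm k))).2)).comp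
        (@continuous_apply ℤ (fun _ => PAAlpha E n) (fun _ => ⊥) i)
  exact he ▸ key

/-- The induced homeomorphism. -/
noncomputable def paHomeo (h : H) : FullShift (PAAlpha E n) ≃ₜ FullShift (PAAlpha E n) where
  toFun := paRawF φ e h
  invFun := paRawF φ e h⁻¹
  left_inv x := by rw [← paRawF_mul, inv_mul_cancel, paRawF_one]
  right_inv x := by rw [← paRawF_mul, mul_inv_cancel, paRawF_one]
  continuous_toFun := paRawF_continuous φ e h
  continuous_invFun := paRawF_continuous φ e h⁻¹

lemma paHomeo_mem (h : H) : paHomeo φ e h ∈ ShiftAut (PAAlpha E n) := by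
  refine Subgroup.mem_centralizer_iff.mpr ?_
  intro s hs
  rw [Set.mem_singleton_iff] at hs
  subst hs
  apply Homeomorph.ext
  intro x
  show (fun i => paRawF φ e h x (i + 1)) = paRawF φ e h (fun i => x (i + 1))
  rw [paRawF_shift]

/-- The induced homomorphism `H →* ShiftAut (PAAlpha E n)`. -/
noncomputable def paHom : H →* ShiftAut (PAAlpha E n) where
  toFun h := ⟨paHomeo φ e h, paHomeo_mem φ e h⟩
  map_one' := by
    apply Subtype.ext
    apply Homeomorph.ext
    intro x
    exact paRawF_one φ e x
  map_mul' h₁ h₂ := by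
    apply Subtype.ext
    apply Homeomorph.ext
    intro x
    exact paRawF_mul φ e h₁ h₂ x

lemma paHom_apply (h : H) (x : FullShift (PAAlpha E n)) :
    ((paHom φ e h : ShiftAut (PAAlpha E n)) : FullShift (PAAlpha E n) ≃ₜ FullShift (PAAlpha E n)) • x
      = paRawF φ e h x := rfl

end PointyAux

/-- If `G` is a finite-index subgroup of `H` and `G` admits a pointy
action, then so does `H`. -/
theorem hasPointyAction_of_finiteIndex (H : Type*) [Group H] (G : Subgroup H)
    [G.FiniteIndex] (hG : HasPointyAction G) : HasPointyAction H := by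
  classical
  obtain ⟨E, hE, z, φ, hφinj, hfix, x₀, hx₀fin, hx₀inj⟩ := hG
  haveI := hE
  haveI : Finite (H ⧸ G) := inferInstance
  obtain ⟨n, ⟨e⟩⟩ := Finite.exists_equiv_fin (H ⧸ G)
  set k₀ : Fin n := e ((1 : H) : H ⧸ G) with hk₀
  set z' : PAAlpha E n := fun k => (z, k₀) with hz'
  -- the free point
  set y₀ : FullShift (PAAlpha E n) := fun i k => (x₀ i, if i = 0 then k else k₀) with hy₀
  have hφfix : ∀ g : G, (φ g : FullShift E ≃ₜ FullShift E) (constConfig E z) = constConfig E z :=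
    fun g => hfix g
  -- key: fixed points of the induced action are trivial
  have hfree : ∀ h : H, paRawF φ e h y₀ = y₀ → h = 1 := by
    intro h hfix'
    have hsmul : ∀ c : H ⧸ G, h⁻¹ • c = c := by
      intro c
      have h2 : (paRawF φ e h y₀ 0 (e c)).2 = (y₀ 0 (e c)).2 :=
        congrArg Prod.snd (congrFun (congrFun hfix' 0) (e c))
      have h2' : (if (0 : ℤ) = 0 then e (h⁻¹ • e.symm (e c)) else k₀)
          = (if (0 : ℤ) = 0 then e c else k₀) := h2
      rw [if_pos (rfl : (0 : ℤ) = 0), if_pos (rfl : (0 : ℤ) = 0)] at h2'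
      have h3 := e.injective h2'
      rwa [Equiv.symm_apply_apply] at h3
    have hcoc : ∀ k : Fin n, paCocycle G h (e.symm k) = 1 := by
      intro k
      have h1 : (fun i => (paRawF φ e h y₀ i k).1) = fun i => (y₀ i k).1 := by
        funext i
        rw [hfix']
      have h2 : (φ (paCocycle G h (e.symm k)) : FullShift E ≃ₜ FullShift E) x₀ = x₀ := h1
      have h5 : (fun g : G => (φ g : FullShift E ≃ₜ FullShift E) • x₀)
            (paCocycle G h (e.symm k))
          = (fun g : G => (φ g : FullShift E ≃ₜ FullShift E) • x₀) 1 := by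
        show (φ (paCocycle G h (e.symm k)) : FullShift E ≃ₜ FullShift E) x₀
          = (φ 1 : FullShift E ≃ₜ FullShift E) x₀
        rw [h2, map_one, pa_one_apply]
      exact hx₀inj h5
    have hc1 : paCocycle G h ((1 : H) : H ⧸ G) = 1 := by
      have := hcoc (e ((1 : H) : H ⧸ G))
      rwa [Equiv.symm_apply_apply] at this
    have h6 := congrArg (Subtype.val) hc1
    rw [paCocycle_coe, hsmul] at h6
    simp only [OneMemClass.coe_one] at h6
    have h7 : h = (((1 : H) : H ⧸ G)).out * ((((1 : H) : H ⧸ G)).out⁻¹ * h *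
        (((1 : H) : H ⧸ G)).out) * (((1 : H) : H ⧸ G)).out⁻¹ := by group
    rw [show (((1 : H) : H ⧸ G)).out⁻¹ * h * (((1 : H) : H ⧸ G)).out = 1 from h6] at h7
    simpa using h7
  have horb : Function.Injective fun h : H =>
      ((paHom φ e h : ShiftAut (PAAlpha E n)) :
        FullShift (PAAlpha E n) ≃ₜ FullShift (PAAlpha E n)) • y₀ := by
    intro h h' hh
    have hh' : paRawF φ e h y₀ = paRawF φ e h' y₀ := hh
    have h1 : paRawF φ e (h'⁻¹ * h) y₀ = y₀ := by
      rw [paRawF_mul, hh', ← paRawF_mul, inv_mul_cancel, paRawF_one]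
    have h2 := hfree _ h1
    rw [inv_mul_eq_one] at h2
    exact h2.symm
  refine ⟨PAAlpha E n, inferInstance, z', paHom φ e, ?_, ?_, y₀, ?_, horb⟩
  · intro h h' hh
    exact horb (congrArg (fun s : ShiftAut (PAAlpha E n) =>
      (s : FullShift (PAAlpha E n) ≃ₜ FullShift (PAAlpha E n)) • y₀) hh)
  · intro h
    show paRawF φ e h (constConfig (PAAlpha E n) z') = constConfig (PAAlpha E n) z'
    funext i k
    show ((φ (paCocycle G h (e.symm k)) : FullShift E ≃ₜ FullShift E)
        (fun j => (constConfig (PAAlpha E n) z' j (e (h⁻¹ • e.symm k))).1) i,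
      (constConfig (PAAlpha E n) z' i (e (h⁻¹ • e.symm k))).2) = (z, k₀)
    have h1 : (fun j => (constConfig (PAAlpha E n) z' j (e (h⁻¹ • e.symm k))).1)
        = constConfig E z := rfl
    rw [h1, hφfix]
    rfl
  · apply Set.Finite.subset (hx₀fin.union (Set.finite_singleton 0))
    intro i hi
    by_contra hmem
    simp only [Set.mem_union, Set.mem_setOf_eq, Set.mem_singleton_iff, not_or, not_not] at hmem
    apply hi
    funext k
    show (x₀ i, if i = 0 then k else k₀) = (z, k₀)
    rw [hmem.1, if_neg hmem.2]
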